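/- For every real p with 1 < p < 2 there exists a constant C > 0, depending only on p, such that for all ε ∈ (0,1) and all ξ, η ∈ ℝ: ( (ε² + ξ²)^{(p−2)/2} ξ − (ε² + η²)^{(p−2)/2} η ) (ξ − η) ≥ C |ξ − η|² (ε² + ξ² + η²)^{(p−2)/2}. -/

import Mathlib

noncomputable section
open Real

private lemma stmt10_deriv (p ε : ℝ) (hε : 0 < ε) (s : ℝ) :
    HasDerivAt (fun s : ℝ => (ε ^ 2 + s ^ 2) ^ ((p - 2) / 2) * s)
      ((ε ^ 2 + s ^ 2) ^ ((p - 4) / 2) * (ε ^ 2 + (p - 1) * s ^ 2)) s := by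
  have hA : 0 < ε ^ 2 + s ^ 2 := by positivity
  have h1 : HasDerivAt (fun s : ℝ => ε ^ 2 + s ^ 2) (2 * s) s := by
    simpa using (hasDerivAt_pow 2 s).const_add (ε ^ 2)
  have h2 := (h1.rpow_const (p := (p - 2) / 2) (Or.inl hA.ne')).mul (hasDerivAt_id s)
  replace h2 : HasDerivAt (fun s : ℝ => (ε ^ 2 + s ^ 2) ^ ((p - 2) / 2) * s) _ s := h2
  convert h2 using 1
  have e1 : (p - 2) / 2 - 1 = (p - 4) / 2 := by ring
  have e2 : (ε ^ 2 + s ^ 2) ^ ((p - 2) / 2)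
      = (ε ^ 2 + s ^ 2) ^ ((p - 4) / 2) * (ε ^ 2 + s ^ 2) := by
    rw [show (p - 2) / 2 = (p - 4) / 2 + 1 by ring, Real.rpow_add_one hA.ne']
  rw [e1, e2]
  simp only [id_eq]
  ring

private lemma stmt10_key (p : ℝ) (hp1 : 1 < p) (hp2 : p < 2) (ε : ℝ) (hε : 0 < ε)
    (ξ η : ℝ) (hle : η ≤ ξ) :
    ((ε ^ 2 + ξ ^ 2) ^ ((p - 2) / 2) * ξ - (ε ^ 2 + η ^ 2) ^ ((p - 2) / 2) * η) * (ξ - η) ≥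
      (p - 1) * |ξ - η| ^ 2 * (ε ^ 2 + ξ ^ 2 + η ^ 2) ^ ((p - 2) / 2) := by
  set f' : ℝ → ℝ := fun s => (ε ^ 2 + s ^ 2) ^ ((p - 4) / 2) * (ε ^ 2 + (p - 1) * s ^ 2)
    with hf'
  have hcont : Continuous f' := by
    apply Continuous.mul
    · apply Continuous.rpow_const
      · continuity
      · intro x; exact Or.inl (by positivity)
    · continuity
  have hftc := intervalIntegral.integral_eq_sub_of_hasDerivAt
    (f := fun s : ℝ => (ε ^ 2 + s ^ 2) ^ ((p - 2) / 2) * s) (a := η) (b := ξ)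
    (fun s _ => stmt10_deriv p ε hε s) (hcont.intervalIntegrable η ξ)
  set K : ℝ := (ε ^ 2 + ξ ^ 2 + η ^ 2) ^ ((p - 2) / 2) with hK
  have hKpos : 0 < K := by positivity
  -- pointwise bound
  have hbound : ∀ s ∈ Set.Icc η ξ, (p - 1) * K ≤ f' s := by
    intro s hs
    have hA : 0 < ε ^ 2 + s ^ 2 := by positivity
    have hs2 : s ^ 2 ≤ ξ ^ 2 + η ^ 2 := by
      rcases le_total 0 s with h | h
      · nlinarith [hs.2, hs.1]
      · nlinarith [hs.1, hs.2]
    have hAB : ε ^ 2 + s ^ 2 ≤ ε ^ 2 + ξ ^ 2 + η ^ 2 := by linarith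
    have hmon : K ≤ (ε ^ 2 + s ^ 2) ^ ((p - 2) / 2) :=
      Real.rpow_le_rpow_of_nonpos hA hAB (by linarith)
    have hstep : (p - 1) * (ε ^ 2 + s ^ 2) ^ ((p - 2) / 2) ≤ f' s := by
      have e2 : (ε ^ 2 + s ^ 2) ^ ((p - 2) / 2)
          = (ε ^ 2 + s ^ 2) ^ ((p - 4) / 2) * (ε ^ 2 + s ^ 2) := by
        rw [show (p - 2) / 2 = (p - 4) / 2 + 1 by ring, Real.rpow_add_one hA.ne']
      rw [hf']
      simp only
      rw [e2]
      have hpow : (0:ℝ) < (ε ^ 2 + s ^ 2) ^ ((p - 4) / 2) := by positivity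
      have hpos : 0 < (ε ^ 2 + s ^ 2) ^ ((p - 4) / 2) * ((2 - p) * ε ^ 2) :=
        mul_pos hpow (mul_pos (by linarith) (by positivity))
      nlinarith [hpos]
    calc (p - 1) * K ≤ (p - 1) * (ε ^ 2 + s ^ 2) ^ ((p - 2) / 2) := by
          apply mul_le_mul_of_nonneg_left hmon (by linarith)
      _ ≤ f' s := hstep
  have hint : (ξ - η) * ((p - 1) * K) ≤ ∫ s in η..ξ, f' s := by
    have := intervalIntegral.integral_mono_on hle
      (intervalIntegrable_const (μ := MeasureTheory.volume) (c := (p - 1) * K)) (hcont.intervalIntegrable η ξ) hbound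
    rw [intervalIntegral.integral_const, smul_eq_mul] at this
    linarith [this]
  rw [ge_iff_le, ← hftc]
  have habs : |ξ - η| ^ 2 = (ξ - η) ^ 2 := sq_abs _
  rw [habs]
  have hd : 0 ≤ ξ - η := by linarith
  calc (p - 1) * (ξ - η) ^ 2 * K = ((ξ - η) * ((p - 1) * K)) * (ξ - η) := by ring
    _ ≤ (∫ s in η..ξ, f' s) * (ξ - η) := mul_le_mul_of_nonneg_right hint hd

theorem stmt10 (p : ℝ) (hp1 : 1 < p) (hp2 : p < 2) :
    ∃ C : ℝ, 0 < C ∧ ∀ ε ∈ Set.Ioo (0 : ℝ) 1, ∀ ξ η : ℝ,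
      ((ε ^ 2 + ξ ^ 2) ^ ((p - 2) / 2) * ξ - (ε ^ 2 + η ^ 2) ^ ((p - 2) / 2) * η) * (ξ - η) ≥
        C * |ξ - η| ^ 2 * (ε ^ 2 + ξ ^ 2 + η ^ 2) ^ ((p - 2) / 2) := by
  refine ⟨p - 1, by linarith, fun ε hε ξ η => ?_⟩
  rcases le_total η ξ with h | h
  · exact stmt10_key p hp1 hp2 ε hε.1 ξ η h
  · have := stmt10_key p hp1 hp2 ε hε.1 η ξ h
    rw [abs_sub_comm ξ η, show ε ^ 2 + ξ ^ 2 + η ^ 2 = ε ^ 2 + η ^ 2 + ξ ^ 2 by ring]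
    calc (p - 1) * |η - ξ| ^ 2 * (ε ^ 2 + η ^ 2 + ξ ^ 2) ^ ((p - 2) / 2)
        ≤ ((ε ^ 2 + η ^ 2) ^ ((p - 2) / 2) * η - (ε ^ 2 + ξ ^ 2) ^ ((p - 2) / 2) * ξ) * (η - ξ) := this
      _ = ((ε ^ 2 + ξ ^ 2) ^ ((p - 2) / 2) * ξ - (ε ^ 2 + η ^ 2) ^ ((p - 2) / 2) * η) * (ξ - η) := by ring
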